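/- Let k ≥ 1, n ≥ 1, d ≥ 1, β ∈ (0,1), Δ > 0, σ > 0, and let G : [0,∞) → [0,1] be decreasing with 0 < G(Δ/(16σk)) < 1. Let z : {1,…,n} → {1,…,k} with clusters T_i* = {j : z_j = i} of sizes n_i*, let θ₁, …, θ_k ∈ ℝ^d, and let Y_j = θ_{z_j} + w_j where w₁, …, w_n are independent ℝ^d-valued random vectors with P[‖w_j‖ > x] ≤ G(x/σ) for all x ≥ 0. Let D₁ ≥ 0 satisfy P[‖w_j‖ > D₁] ≤ exp(−5/(4β²)) for each j. Then with probability at least 1 − 2k·exp(−(min_i n_i*)/4), the following hold simultaneously for every i ∈ {1,…,k}: (i) |{j ∈ T_i* : ‖Y_j − θ_i‖ ≤ D₁}| ≥ n_i*(1 − β²), and (ii) |{j ∈ T_i* : ‖Y_j − θ_i‖ ≤ Δ/(16k)}| ≥ n_i*·(1 − 5/(4·log(1/G(Δ/(16σk))))). -/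

import Mathlib

open MeasureTheory ProbabilityTheory Filter Finset

lemma indicator_chernoff {Ω : Type*} [MeasureSpace Ω] [IsProbabilityMeasure (ℙ : Measure Ω)]
    {ι : Type*} (A : ι → Set Ω) (hA : ∀ j, MeasurableSet (A j))
    (hind : iIndepFun
      (fun j => (A j).indicator (fun _ => (1:ℝ))) ℙ)
    (s : Finset ι) (p t a : ℝ) (ht : 0 ≤ t) (hp0 : 0 ≤ p)
    (hp : ∀ j ∈ s, (ℙ (A j)).toReal ≤ p) :
    (ℙ {ω | a ≤ ∑ j ∈ s, (A j).indicator (fun _ => (1:ℝ)) ω}).toReal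
      ≤ Real.exp ((s.card : ℝ) * (Real.exp t * p) - t * a) := by
  classical
  set X : ι → Ω → ℝ := fun j => (A j).indicator (fun _ => (1:ℝ)) with hX
  have hXmeas : ∀ j, Measurable (X j) := fun j =>
    (measurable_const.indicator (hA j))
  have hX01 : ∀ j ω, X j ω = 0 ∨ X j ω = 1 := by
    intro j ω
    by_cases h : ω ∈ A j <;> simp [hX, Set.indicator_apply, h]
  have hXnonneg : ∀ j ω, 0 ≤ X j ω := by
    intro j ω; rcases hX01 j ω with h | h <;> simp [h]
  have hXle : ∀ j ω, X j ω ≤ 1 := by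
    intro j ω; rcases hX01 j ω with h | h <;> simp [h]
  -- integrability of exp(t * sum)
  have hSmeas : Measurable (fun ω => ∑ j ∈ s, X j ω) := by
    exact Finset.measurable_sum s fun j _ => hXmeas j
  have hint : Integrable (fun ω => Real.exp (t * ∑ j ∈ s, X j ω)) ℙ := by
    refine Integrable.mono' (integrable_const (Real.exp (t * s.card)))
      ((hSmeas.const_mul t).exp.aestronglyMeasurable) ?_
    filter_upwards with ω
    rw [Real.norm_eq_abs, abs_of_nonneg (Real.exp_nonneg _)]
    refine Real.exp_le_exp.2 (mul_le_mul_of_nonneg_left ?_ ht)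
    calc ∑ j ∈ s, X j ω ≤ ∑ j ∈ s, 1 := Finset.sum_le_sum fun j _ => hXle j ω
    _ = s.card := by simp
  have hchern := measure_ge_le_exp_mul_mgf (X := fun ω => ∑ j ∈ s, X j ω) a ht hint
  -- mgf of each indicator
  have hmgf : ∀ j ∈ s, mgf (X j) ℙ t ≤ Real.exp (Real.exp t * p) := by
    intro j hj
    have hEq : (fun ω => Real.exp (t * X j ω))
        = fun ω => (A j).indicator (fun _ => Real.exp t - 1) ω + 1 := by
      funext ω
      by_cases h : ω ∈ A j <;> simp [hX, Set.indicator_apply, h]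
    have : mgf (X j) ℙ t = (Real.exp t - 1) * (ℙ (A j)).toReal + 1 := by
      rw [mgf, hEq]
      rw [integral_add (by
        refine (integrable_const (Real.exp t - 1)).indicator (hA j)) (integrable_const 1)]
      rw [integral_indicator_const _ (hA j)]
      simp [mul_comm, smul_eq_mul, measureReal_def]
    rw [this]
    have h1 : (Real.exp t - 1) * (ℙ (A j)).toReal + 1
        ≤ Real.exp ((Real.exp t - 1) * (ℙ (A j)).toReal) := by
      linarith [Real.add_one_le_exp ((Real.exp t - 1) * (ℙ (A j)).toReal)]
    refine h1.trans (Real.exp_le_exp.2 ?_)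
    have h2 : (Real.exp t - 1) * (ℙ (A j)).toReal ≤ (Real.exp t - 1) * p := by
      refine mul_le_mul_of_nonneg_left (hp j hj) ?_
      simp [Real.one_le_exp_iff, ht]
    refine h2.trans ?_
    nlinarith [Real.exp_nonneg t]
  have hmgfnn : ∀ j, 0 ≤ mgf (X j) ℙ t := fun j => mgf_nonneg
  have hprod : mgf (fun ω => ∑ j ∈ s, X j ω) ℙ t ≤ Real.exp ((s.card : ℝ) * (Real.exp t * p)) := by
    have := hind.mgf_sum hXmeas s (t := t)
    have heq : (fun ω => ∑ j ∈ s, X j ω) = ∑ j ∈ s, X j := by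
      funext ω; simp
    rw [heq, this]
    calc ∏ j ∈ s, mgf (X j) ℙ t ≤ ∏ j ∈ s, Real.exp (Real.exp t * p) :=
      Finset.prod_le_prod (fun j _ => hmgfnn j) hmgf
    _ = Real.exp ((s.card : ℝ) * (Real.exp t * p)) := by
      rw [Finset.prod_const, ← Real.exp_nat_mul]
  calc (ℙ {ω | a ≤ ∑ j ∈ s, X j ω}).toReal
      ≤ Real.exp (-t * a) * mgf (fun ω => ∑ j ∈ s, X j ω) ℙ t := hchern
    _ ≤ Real.exp (-t * a) * Real.exp ((s.card : ℝ) * (Real.exp t * p)) := by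
        exact mul_le_mul_of_nonneg_left hprod (Real.exp_nonneg _)
    _ = Real.exp ((s.card : ℝ) * (Real.exp t * p) - t * a) := by
        rw [← Real.exp_add]; ring_nf

set_option maxHeartbeats 1600000 in
theorem k_cluster_initialization_concentration
    (k n d : ℕ) (hk : 1 ≤ k) (hn : 1 ≤ n) (hd : 1 ≤ d)
    (β Δ σ : ℝ) (hβ : β ∈ Set.Ioo (0 : ℝ) 1) (hΔ : 0 < Δ) (hσ : 0 < σ)
    (G : ℝ → ℝ) (hGanti : AntitoneOn G (Set.Ici 0))
    (hGrange : ∀ x : ℝ, 0 ≤ x → G x ∈ Set.Icc (0 : ℝ) 1)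
    (hGpos : 0 < G (Δ / (16 * σ * k))) (hGlt : G (Δ / (16 * σ * k)) < 1)
    (z : Fin n → Fin k) (θ : Fin k → EuclideanSpace ℝ (Fin d))
    (Ω : Type*) [MeasureSpace Ω] [IsProbabilityMeasure (ℙ : Measure Ω)]
    (w : Fin n → Ω → EuclideanSpace ℝ (Fin d))
    (hmeas : ∀ j, Measurable (w j))
    (hindep : iIndepFun w ℙ)
    (htail : ∀ j, ∀ x : ℝ, 0 ≤ x → (ℙ {ω | x < ‖w j ω‖}).toReal ≤ G (x / σ))
    (D₁ : ℝ) (hD₁ : 0 ≤ D₁)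
    (hD₁tail : ∀ j, (ℙ {ω | D₁ < ‖w j ω‖}).toReal ≤ Real.exp (-(5 / (4 * β ^ 2)))) :
    1 - 2 * k * Real.exp (-((⨅ i : Fin k,
          ((Finset.univ.filter (fun j => z j = i)).card) : ℕ) : ℝ) / 4)
      ≤ (ℙ {ω | ∀ i : Fin k,
            (((Finset.univ.filter (fun j => z j = i)).card : ℝ) * (1 - β ^ 2)
              ≤ (((Finset.univ.filter (fun j => z j = i)).filter
                  (fun j => ‖(θ (z j) + w j ω) - θ i‖ ≤ D₁)).card : ℝ)) ∧
            (((Finset.univ.filter (fun j => z j = i)).card : ℝ)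
                * (1 - 5 / (4 * Real.log (1 / G (Δ / (16 * σ * k)))))
              ≤ (((Finset.univ.filter (fun j => z j = i)).filter
                  (fun j => ‖(θ (z j) + w j ω) - θ i‖ ≤ Δ / (16 * k))).card : ℝ))}).toReal := by
  classical
  obtain ⟨hβ0, hβ1⟩ := hβ
  have hk0 : (0:ℝ) < k := by exact_mod_cast hk
  -- abbreviations
  set g : ℝ := G (Δ / (16 * σ * k)) with hg
  set L : ℝ := Real.log (1 / g) with hLdef
  have hL : 0 < L := Real.log_pos (one_lt_one_div hGpos hGlt)
  have hexpL : Real.exp L = 1 / g := Real.exp_log (by positivity)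
  have hβ2 : (0:ℝ) < β ^ 2 := by positivity
  set T : Fin k → Finset (Fin n) := fun i => Finset.univ.filter (fun j => z j = i) with hT
  set M : ℕ := ⨅ i : Fin k, (T i).card with hM
  have hMle : ∀ i, (M:ℝ) ≤ ((T i).card : ℝ) := by
    intro i
    exact_mod_cast Nat.cast_le.2 (ciInf_le (OrderBot.bddBelow _) i)
  -- the two families of bad sets
  set AD : Fin n → Set Ω := fun j => {ω | D₁ < ‖w j ω‖} with hAD
  set Aδ : Fin n → Set Ω := fun j => {ω | Δ / (16 * k) < ‖w j ω‖} with hAδ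
  have hADm : ∀ j, MeasurableSet (AD j) := fun j =>
    measurableSet_lt measurable_const (hmeas j).norm
  have hAδm : ∀ j, MeasurableSet (Aδ j) := fun j =>
    measurableSet_lt measurable_const (hmeas j).norm
  -- independence of indicator families
  have hindAD : iIndepFun
      (fun j => (AD j).indicator (fun _ => (1:ℝ))) ℙ := by
    have h := hindep.comp (fun _ => ({v : EuclideanSpace ℝ (Fin d) | D₁ < ‖v‖}).indicator
        (fun _ => (1:ℝ)))
      (fun _ => measurable_const.indicator (measurableSet_lt measurable_const measurable_norm))
    have heq : (fun j => (AD j).indicator (fun _ => (1:ℝ)))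
        = fun j => (({v : EuclideanSpace ℝ (Fin d) | D₁ < ‖v‖}).indicator
          (fun _ => (1:ℝ))) ∘ (w j) := by
      funext j ω
      by_cases hc : D₁ < ‖w j ω‖ <;>
        simp [hAD, Set.indicator_apply, hc, Function.comp]
    rw [heq]; exact h
  have hindAδ : iIndepFun
      (fun j => (Aδ j).indicator (fun _ => (1:ℝ))) ℙ := by
    have h := hindep.comp (fun _ => ({v : EuclideanSpace ℝ (Fin d) | Δ / (16 * k) < ‖v‖}).indicator
        (fun _ => (1:ℝ)))
      (fun _ => measurable_const.indicator (measurableSet_lt measurable_const measurable_norm))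
    have heq : (fun j => (Aδ j).indicator (fun _ => (1:ℝ)))
        = fun j => (({v : EuclideanSpace ℝ (Fin d) | Δ / (16 * k) < ‖v‖}).indicator
          (fun _ => (1:ℝ))) ∘ (w j) := by
      funext j ω
      by_cases hc : Δ / (16 * k) < ‖w j ω‖ <;>
        simp [hAδ, Set.indicator_apply, hc, Function.comp]
    rw [heq]; exact h
  -- tail bound for Aδ
  have hAδtail : ∀ j, (ℙ (Aδ j)).toReal ≤ g := by
    intro j
    have h := htail j (Δ / (16 * k)) (by positivity)
    have harg : Δ / (16 * k) / σ = Δ / (16 * σ * k) := by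
      rw [div_div]; ring_nf
    rwa [harg] at h
  -- Chernoff bounds
  have hbadD : ∀ i, (ℙ {ω | β ^ 2 * ((T i).card : ℝ)
        ≤ ∑ j ∈ T i, (AD j).indicator (fun _ => (1:ℝ)) ω}).toReal
      ≤ Real.exp (-(M:ℝ)/4) := by
    intro i
    have h := indicator_chernoff AD hADm hindAD (T i) (Real.exp (-(5/(4*β^2))))
      (5/(4*β^2)) (β^2 * ((T i).card : ℝ)) (by positivity) (Real.exp_nonneg _)
      (fun j _ => hD₁tail j)
    refine h.trans (Real.exp_le_exp.2 ?_)
    have h1 : Real.exp (5/(4*β^2)) * Real.exp (-(5/(4*β^2))) = 1 := by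
      rw [← Real.exp_add]; simp
    have h2 : (5/(4*β^2)) * (β^2 * ((T i).card : ℝ)) = 5/4 * ((T i).card : ℝ) := by
      field_simp
    rw [h1, h2, mul_one]
    have := hMle i
    linarith
  have hbadδ : ∀ i, (ℙ {ω | 5/(4*L) * ((T i).card : ℝ)
        ≤ ∑ j ∈ T i, (Aδ j).indicator (fun _ => (1:ℝ)) ω}).toReal
      ≤ Real.exp (-(M:ℝ)/4) := by
    intro i
    have h := indicator_chernoff Aδ hAδm hindAδ (T i) g L
      (5/(4*L) * ((T i).card : ℝ)) hL.le hGpos.le (fun j _ => hAδtail j)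
    refine h.trans (Real.exp_le_exp.2 ?_)
    have h1 : Real.exp L * g = 1 := by
      rw [hexpL]; field_simp
    have h2 : L * (5/(4*L) * ((T i).card : ℝ)) = 5/4 * ((T i).card : ℝ) := by
      field_simp
    rw [h1, h2, mul_one]
    have := hMle i
    linarith
  -- the bad event
  set Bad : Set Ω := ⋃ i : Fin k,
      ({ω | β ^ 2 * ((T i).card : ℝ)
          ≤ ∑ j ∈ T i, (AD j).indicator (fun _ => (1:ℝ)) ω} ∪
       {ω | 5/(4*L) * ((T i).card : ℝ)
          ≤ ∑ j ∈ T i, (Aδ j).indicator (fun _ => (1:ℝ)) ω}) with hBad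
  have hSDmeas : ∀ i, Measurable (fun ω => ∑ j ∈ T i, (AD j).indicator (fun _ => (1:ℝ)) ω) :=
    fun i => Finset.measurable_sum _ fun j _ => measurable_const.indicator (hADm j)
  have hSδmeas : ∀ i, Measurable (fun ω => ∑ j ∈ T i, (Aδ j).indicator (fun _ => (1:ℝ)) ω) :=
    fun i => Finset.measurable_sum _ fun j _ => measurable_const.indicator (hAδm j)
  have hBadm : MeasurableSet Bad := by
    refine MeasurableSet.iUnion fun i => MeasurableSet.union ?_ ?_
    · exact measurableSet_le measurable_const (hSDmeas i)
    · exact measurableSet_le measurable_const (hSδmeas i)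
  have hBadP : (ℙ Bad).toReal ≤ 2 * k * Real.exp (-(M:ℝ)/4) := by
    have hstep : ∀ i : Fin k, (ℙ (({ω | β ^ 2 * ((T i).card : ℝ)
          ≤ ∑ j ∈ T i, (AD j).indicator (fun _ => (1:ℝ)) ω} ∪
       {ω | 5/(4*L) * ((T i).card : ℝ)
          ≤ ∑ j ∈ T i, (Aδ j).indicator (fun _ => (1:ℝ)) ω}))).toReal
        ≤ 2 * Real.exp (-(M:ℝ)/4) := by
      intro i
      have h1 := measure_union_le (μ := ℙ) {ω | β ^ 2 * ((T i).card : ℝ)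
          ≤ ∑ j ∈ T i, (AD j).indicator (fun _ => (1:ℝ)) ω}
        {ω | 5/(4*L) * ((T i).card : ℝ)
          ≤ ∑ j ∈ T i, (Aδ j).indicator (fun _ => (1:ℝ)) ω}
      have h2 := ENNReal.toReal_mono (by
        exact ENNReal.add_ne_top.2 ⟨measure_ne_top _ _, measure_ne_top _ _⟩) h1
      rw [ENNReal.toReal_add (measure_ne_top _ _) (measure_ne_top _ _)] at h2
      have := hbadD i; have := hbadδ i; linarith
    have h3 : ℙ Bad ≤ ∑ i : Fin k, ℙ (({ω | β ^ 2 * ((T i).card : ℝ)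
          ≤ ∑ j ∈ T i, (AD j).indicator (fun _ => (1:ℝ)) ω} ∪
       {ω | 5/(4*L) * ((T i).card : ℝ)
          ≤ ∑ j ∈ T i, (Aδ j).indicator (fun _ => (1:ℝ)) ω})) :=
      measure_iUnion_fintype_le _ _
    have h4 := ENNReal.toReal_mono (by
      exact (ENNReal.sum_lt_top.2 fun i _ => measure_lt_top _ _).ne) h3
    rw [ENNReal.toReal_sum (fun i _ => measure_ne_top _ _)] at h4
    refine h4.trans ?_
    calc ∑ i : Fin k, (ℙ _).toReal ≤ ∑ _i : Fin k, 2 * Real.exp (-(M:ℝ)/4) :=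
        Finset.sum_le_sum fun i _ => hstep i
      _ = 2 * k * Real.exp (-(M:ℝ)/4) := by
        rw [Finset.sum_const, Finset.card_univ, Fintype.card_fin, nsmul_eq_mul]; ring
  -- complement inclusion
  have hsub : Badᶜ ⊆ {ω | ∀ i : Fin k,
            (((Finset.univ.filter (fun j => z j = i)).card : ℝ) * (1 - β ^ 2)
              ≤ (((Finset.univ.filter (fun j => z j = i)).filter
                  (fun j => ‖(θ (z j) + w j ω) - θ i‖ ≤ D₁)).card : ℝ)) ∧
            (((Finset.univ.filter (fun j => z j = i)).card : ℝ)
                * (1 - 5 / (4 * Real.log (1 / G (Δ / (16 * σ * k)))))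
              ≤ (((Finset.univ.filter (fun j => z j = i)).filter
                  (fun j => ‖(θ (z j) + w j ω) - θ i‖ ≤ Δ / (16 * k))).card : ℝ))} := by
    intro ω hω i
    simp only [hBad, Set.compl_iUnion, Set.mem_iInter, Set.mem_compl_iff, Set.mem_union,
      Set.mem_setOf_eq, not_or, not_le] at hω
    obtain ⟨hD, hδ⟩ := hω i
    have key : ∀ (c : ℝ) (A : Fin n → Set Ω), (∀ j, A j = {ω | c < ‖w j ω‖}) →
        (∑ j ∈ T i, (A j).indicator (fun _ => (1:ℝ)) ω)
          = (((T i).filter (fun j => c < ‖w j ω‖)).card : ℝ) ∧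
        ((T i).filter (fun j => ‖(θ (z j) + w j ω) - θ i‖ ≤ c)).card
          = (T i).card - ((T i).filter (fun j => c < ‖w j ω‖)).card := by
      intro c A hAe
      constructor
      · rw [← Finset.sum_boole]
        refine Finset.sum_congr rfl fun j _ => ?_
        by_cases hc : c < ‖w j ω‖ <;> simp [hAe j, Set.indicator_apply, hc]
      · have hfe : (T i).filter (fun j => ‖(θ (z j) + w j ω) - θ i‖ ≤ c)
            = (T i).filter (fun j => ¬ (c < ‖w j ω‖)) := by
          refine Finset.filter_congr fun j hj => ?_
          have hz : z j = i := by simpa [hT] using hj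
          rw [hz, add_sub_cancel_left, not_lt]
        rw [hfe, ← Finset.card_filter_add_card_filter_not
          (s := T i) (p := fun j => c < ‖w j ω‖)]
        omega
    obtain ⟨hs1, hc1⟩ := key D₁ AD (fun j => rfl)
    obtain ⟨hs2, hc2⟩ := key (Δ / (16 * k)) Aδ (fun j => rfl)
    rw [hs1] at hD
    rw [hs2] at hδ
    have hle1 : ((T i).filter (fun j => D₁ < ‖w j ω‖)).card ≤ (T i).card :=
      Finset.card_filter_le _ _
    have hle2 : ((T i).filter (fun j => Δ / (16*k) < ‖w j ω‖)).card ≤ (T i).card :=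
      Finset.card_filter_le _ _
    constructor
    · show ((T i).card : ℝ) * (1 - β ^ 2)
        ≤ (((T i).filter (fun j => ‖(θ (z j) + w j ω) - θ i‖ ≤ D₁)).card : ℝ)
      rw [hc1, Nat.cast_sub hle1]
      nlinarith [hD]
    · show ((T i).card : ℝ) * (1 - 5 / (4 * L))
        ≤ (((T i).filter (fun j => ‖(θ (z j) + w j ω) - θ i‖ ≤ Δ / (16*k))).card : ℝ)
      rw [hc2, Nat.cast_sub hle2]
      have h54 : ((T i).card : ℝ) * (5 / (4 * L)) = 5/(4*L) * ((T i).card : ℝ) := by ring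
      nlinarith [hδ]
  -- conclude
  have hcompl : (1:ℝ) - (ℙ Bad).toReal = (ℙ Badᶜ).toReal := by
    rw [measure_compl hBadm (measure_ne_top _ _), measure_univ,
      ENNReal.toReal_sub_of_le prob_le_one ENNReal.one_ne_top, ENNReal.toReal_one]
  have hmono := ENNReal.toReal_mono (measure_ne_top ℙ _) (measure_mono hsub)
  calc 1 - 2 * k * Real.exp (-(M:ℝ)/4) ≤ 1 - (ℙ Bad).toReal := by linarith
    _ = (ℙ Badᶜ).toReal := hcompl
    _ ≤ _ := hmono
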